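/- Let q be a prime power, k ≥ 1, ℓ ≥ 3, and let S ⊆ G_q(k, ℓk) be a spread, i.e., a partial spread with |S| = (q^{ℓk} − 1)/(q^k − 1). Then S^⊥ ⊆ G_q((ℓ−1)k, ℓk) is an equidistant ((ℓ−2)k)-intersecting code of the same cardinality which is not a sunflower. -/

import Mathlib

open Submodule Module Set

/-- The orthogonal complement of a subspace of `Fin n → F` with respect to the
standard bilinear form `(x, y) ↦ ∑ i, x i * y i`. -/
def stdOrth {F : Type} [Field F] {n : ℕ} (U : Submodule F (Fin n → F)) :
    Submodule F (Fin n → F) where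
  carrier := {x | ∀ y ∈ U, ∑ i, x i * y i = 0}
  add_mem' := by
    intro a b ha hb y hy
    simp only [Set.mem_setOf_eq] at *
    simp [add_mul, Finset.sum_add_distrib, ha y hy, hb y hy]
  zero_mem' := by intro y hy; simp
  smul_mem' := by
    intro c a ha y hy
    simp only [Set.mem_setOf_eq] at *
    simp [smul_eq_mul, mul_assoc, ← Finset.mul_sum, ha y hy]

/-- An equidistant `c`-intersecting subspace code of constant dimension `k` in `F^n`:
a set of at least two `k`-dimensional subspaces, any two distinct members of which
intersect in dimension `c`. -/
def IsEquidistantCode (F : Type) [Field F] (n k c : ℕ)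
    (C : Set (Submodule F (Fin n → F))) : Prop :=
  2 ≤ C.ncard ∧ (∀ U ∈ C, Module.finrank F U = k) ∧
    ∀ U ∈ C, ∀ V ∈ C, U ≠ V → Module.finrank F ↥(U ⊓ V) = c

/-- A set of subspaces is a sunflower if there is a common center `Z` equal to the
intersection of any two distinct members. -/
def IsSunflower {F : Type} [Field F] {n : ℕ} (C : Set (Submodule F (Fin n → F))) : Prop :=
  ∃ Z : Submodule F (Fin n → F), ∀ U ∈ C, ∀ V ∈ C, U ≠ V → U ⊓ V = Z

/-- `eMax F n k c` is the maximum cardinality of an equidistant `c`-intersecting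
code of constant dimension `k` in `F^n`. -/
noncomputable def eMax (F : Type) [Field F] (n k c : ℕ) : ℕ :=
  sSup {m | ∃ C : Set (Submodule F (Fin n → F)), IsEquidistantCode F n k c C ∧ C.ncard = m}

namespace StdOrthAux

variable {F : Type} [Field F] {n : ℕ}

lemma mem_stdOrth {U : Submodule F (Fin n → F)} {x : Fin n → F} :
    x ∈ stdOrth U ↔ ∀ y ∈ U, ∑ i, x i * y i = 0 := Iff.rfl

noncomputable def eDual (F : Type) [Field F] (n : ℕ) :
    (Fin n → F) ≃ₗ[F] Module.Dual F (Fin n → F) :=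
  (Pi.basisFun F (Fin n)).toDualEquiv

lemma eDual_apply (x y : Fin n → F) : eDual F n x y = ∑ i, y i * x i := by
  have hb := (Pi.basisFun F (Fin n)).sum_repr y
  have hx : ∀ i, (Pi.basisFun F (Fin n)).toDual x (Pi.single i 1) = x i := by
    intro i
    have := (Pi.basisFun F (Fin n)).toDual_apply_left x i
    simpa using this
  conv_lhs => rw [← hb]
  rw [map_sum]
  simp [eDual, Basis.toDualEquiv, hx, mul_comm]
  exact Finset.sum_congr rfl fun i _ => by rw [mul_comm]; exact congrArg (· * y i) (hx i)

lemma stdOrth_eq (U : Submodule F (Fin n → F)) :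
    stdOrth U = U.dualAnnihilator.comap (eDual F n).toLinearMap := by
  ext x
  simp only [mem_stdOrth, Submodule.mem_comap, LinearEquiv.coe_coe,
    Submodule.mem_dualAnnihilator]
  constructor
  · intro h y hy
    rw [eDual_apply]
    rw [← h y hy]
    exact Finset.sum_congr rfl fun i _ => mul_comm _ _
  · intro h y hy
    have := h y hy
    rw [eDual_apply] at this
    rw [← this]
    exact Finset.sum_congr rfl fun i _ => mul_comm _ _

lemma finrank_stdOrth (U : Submodule F (Fin n → F)) :
    finrank F (stdOrth U) = n - finrank F U := by
  rw [stdOrth_eq, Submodule.comap_equiv_eq_map_symm]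
  rw [LinearEquiv.finrank_map_eq]
  have h1 : finrank F ((Fin n → F) ⧸ U) = finrank F U.dualAnnihilator :=
    LinearEquiv.finrank_eq (Subspace.quotEquivAnnihilator U)
  have h2 := U.finrank_quotient_add_finrank
  rw [Module.finrank_fin_fun (R := F)] at h2
  omega

lemma stdOrth_sup (U V : Submodule F (Fin n → F)) :
    stdOrth (U ⊔ V) = stdOrth U ⊓ stdOrth V := by
  simp only [stdOrth_eq, Submodule.dualAnnihilator_sup_eq, Submodule.comap_inf]

lemma stdOrth_injective : Function.Injective (stdOrth (F := F) (n := n)) := by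
  intro U V h
  rw [stdOrth_eq, stdOrth_eq] at h
  have h2 : U.dualAnnihilator = V.dualAnnihilator :=
    Submodule.comap_injective_of_surjective (eDual F n).surjective h
  have := congrArg Submodule.dualCoannihilator h2
  rwa [Subspace.dualAnnihilator_dualCoannihilator_eq,
    Subspace.dualAnnihilator_dualCoannihilator_eq] at this

lemma geom_div {m : ℕ} (hm : 2 ≤ m) (t : ℕ) :
    (m ^ t - 1) / (m - 1) = ∑ i ∈ Finset.range t, m ^ i := by
  have h1 : (1:ℕ) ≤ m := by omega
  have h2 : (1:ℕ) ≤ m ^ t := Nat.one_le_pow _ _ (by omega)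
  have key : (∑ i ∈ Finset.range t, m ^ i) * (m - 1) = m ^ t - 1 := by
    have hg := geom_sum_mul (m : ℤ) t
    zify [h1, h2]
    push_cast at hg ⊢
    linarith
  rw [← key, Nat.mul_div_cancel _ (by omega : 0 < m - 1)]

end StdOrthAux

open StdOrthAux in
/-- The orthogonal of a spread `S ⊆ G_q(k, ℓk)` (`ℓ ≥ 3`) is an equidistant
`(ℓ-2)k`-intersecting code of the same cardinality which is not a sunflower. -/
theorem orth_of_spread_not_sunflower
    (q : ℕ) (hq : IsPrimePow q) (F : Type) [Field F] [Fintype F]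
    (hF : Fintype.card F = q) (k ℓ : ℕ) (hk : 1 ≤ k) (hl : 3 ≤ ℓ)
    (S : Set (Submodule F (Fin (ℓ * k) → F)))
    (hdim : ∀ U ∈ S, Module.finrank F U = k)
    (hsp : ∀ U ∈ S, ∀ V ∈ S, U ≠ V → U ⊓ V = ⊥)
    (hcard : S.ncard = (q ^ (ℓ * k) - 1) / (q ^ k - 1)) :
    IsEquidistantCode F (ℓ * k) ((ℓ - 1) * k) ((ℓ - 2) * k) (stdOrth '' S) ∧
    (stdOrth '' S).ncard = S.ncard ∧
    ¬ IsSunflower (stdOrth '' S) := by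
  classical
  have hq2 : 2 ≤ q := hq.two_le
  have hm2 : 2 ≤ q ^ k := le_trans hq2 (Nat.le_self_pow (by omega) q)
  have hgeom : S.ncard = ∑ i ∈ Finset.range ℓ, (q ^ k) ^ i := by
    rw [hcard, mul_comm ℓ k, pow_mul, StdOrthAux.geom_div hm2]
  have hS2 : 2 ≤ S.ncard := by
    have hsub : ∑ i ∈ Finset.range 2, (q ^ k) ^ i ≤ ∑ i ∈ Finset.range ℓ, (q ^ k) ^ i :=
      Finset.sum_le_sum_of_subset (Finset.range_subset_range.mpr (by omega))
    simp [Finset.sum_range_succ] at hsub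
    rw [hgeom]
    omega
  have himg : (stdOrth '' S).ncard = S.ncard :=
    Set.ncard_image_of_injective S stdOrth_injective
  have hdim' : ∀ W ∈ stdOrth '' S, finrank F W = (ℓ - 1) * k := by
    rintro W ⟨U, hU, rfl⟩
    rw [finrank_stdOrth, hdim U hU, Nat.sub_mul, one_mul]
  have hsupdim : ∀ U ∈ S, ∀ V ∈ S, U ≠ V → finrank F ↥(U ⊔ V) = k + k := by
    intro U hU V hV hUV
    have h := Submodule.finrank_sup_add_finrank_inf_eq U V
    rw [hsp U hU V hV hUV, hdim U hU, hdim V hV] at h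
    simpa using h
  have hint : ∀ W1 ∈ stdOrth '' S, ∀ W2 ∈ stdOrth '' S, W1 ≠ W2 →
      finrank F ↥(W1 ⊓ W2) = (ℓ - 2) * k := by
    rintro W1 ⟨U, hU, rfl⟩ W2 ⟨V, hV, rfl⟩ hne
    have hUV : U ≠ V := fun h => hne (by rw [h])
    rw [← stdOrth_sup, finrank_stdOrth, hsupdim U hU V hV hUV]
    have h2 : (ℓ - 2) * k = ℓ * k - 2 * k := by rw [Nat.sub_mul]
    omega
  refine ⟨⟨by rw [himg]; exact hS2, hdim', hint⟩, himg, ?_⟩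
  classical
  have hq2 : 2 ≤ q := hq.two_le
  rintro ⟨Z, hZ⟩
  have hfinsub : Finite (Submodule F (Fin (ℓ * k) → F)) :=
    Finite.of_injective (fun U => (U : Set (Fin (ℓ * k) → F))) SetLike.coe_injective
  obtain ⟨U, hU, V, hV, hUV⟩ : ∃ U ∈ S, ∃ V ∈ S, U ≠ V :=
    (Set.one_lt_ncard (Set.toFinite S)).mp (by omega)
  have hZeq : ∀ A ∈ S, ∀ B ∈ S, A ≠ B → stdOrth (A ⊔ B) = Z := by
    intro A hA B hB hAB
    rw [stdOrth_sup]
    exact hZ _ ⟨A, hA, rfl⟩ _ ⟨B, hB, rfl⟩ (fun h => hAB (stdOrth_injective h))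
  have hle : ∀ A ∈ S, A ≤ U ⊔ V := by
    intro A hA
    by_cases hAU : A = U
    · exact hAU ▸ le_sup_left
    · have h1 : stdOrth (A ⊔ U) = Z := hZeq A hA U hU hAU
      have h2 : stdOrth (V ⊔ U) = Z := hZeq V hV U hU (Ne.symm hUV)
      have h3 : A ⊔ U = V ⊔ U := stdOrth_injective (h1.trans h2.symm)
      have hA' : A ≤ V ⊔ U := h3 ▸ le_sup_left
      rwa [sup_comm] at hA'
  set W := U ⊔ V with hWdef
  have hWrank : finrank F ↥W = k + k := hsupdim U hU V hV hUV
  haveI : Fintype ↥W := Fintype.ofFinite ↥W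
  have hcardW : Nat.card ↥W = q ^ (k + k) := by
    rw [Nat.card_eq_fintype_card, card_eq_pow_finrank (K := F) (V := ↥W), hF, hWrank]
  have hex : ∀ A : S, ∃ x : Fin (ℓ * k) → F,
      x ∈ (A : Submodule F (Fin (ℓ * k) → F)) ∧ x ≠ 0 := by
    rintro ⟨A, hA⟩
    apply Submodule.exists_mem_ne_zero_of_ne_bot
    intro hbot
    have hbot' : A = ⊥ := hbot
    have hdA := hdim A hA
    rw [hbot', finrank_bot] at hdA
    omega
  choose f hf1 hf2 using hex
  have hinj : Function.Injective fun A : S =>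
      (⟨f A, ⟨hle A A.2 (hf1 A), hf2 A⟩⟩ : ((W : Set (Fin (ℓ * k) → F)) \ {0} : Set _)) := by
    intro A B hAB
    by_contra hne
    have hABval : (A : Submodule F (Fin (ℓ * k) → F)) ≠ B := fun h => hne (Subtype.ext h)
    have hfeq : f A = f B := congrArg Subtype.val hAB
    have hmem : f A ∈ (A : Submodule F (Fin (ℓ * k) → F)) ⊓ (B : Submodule F (Fin (ℓ * k) → F)) :=
      ⟨hf1 A, hfeq ▸ hf1 B⟩
    rw [hsp A A.2 B B.2 hABval] at hmem
    exact hf2 A hmem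
  have hcardle : S.ncard ≤ ((W : Set (Fin (ℓ * k) → F)) \ {0}).ncard := by
    rw [← Nat.card_coe_set_eq, ← Nat.card_coe_set_eq]
    exact Nat.card_le_card_of_injective _ hinj
  have h0W : (0 : Fin (ℓ * k) → F) ∈ (W : Set (Fin (ℓ * k) → F)) := W.zero_mem
  have hdiff : ((W : Set (Fin (ℓ * k) → F)) \ {0}).ncard = q ^ (k + k) - 1 := by
    rw [Set.ncard_diff_singleton_of_mem h0W]
    have hWc : (W : Set (Fin (ℓ * k) → F)).ncard = Nat.card ↥W :=
      (Nat.card_coe_set_eq _).symm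
    rw [hWc, hcardW]
  have hlb : q ^ ((ℓ - 1) * k) ≤ S.ncard := by
    have heq : q ^ ((ℓ - 1) * k) = (q ^ k) ^ (ℓ - 1) := by rw [mul_comm, pow_mul]
    rw [hgeom, heq]
    exact Finset.single_le_sum (fun i _ => Nat.zero_le _) (Finset.mem_range.mpr (by omega))
  have hle2 : q ^ (k + k) ≤ q ^ ((ℓ - 1) * k) := by
    apply Nat.pow_le_pow_right (by omega)
    have h2k : 2 * k ≤ (ℓ - 1) * k := Nat.mul_le_mul_right k (by omega)
    omega
  have hpos : 1 ≤ q ^ (k + k) := Nat.one_le_pow _ _ (by omega)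
  omega
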